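/- Let n, k, u be positive integers with 2 ≤ k and 2k ≤ n − 1, and let D ⊆ ℤ/nℤ be an (n,k,u)-difference set. Then −1 is not a multiplier of D: for every t ∈ ℤ/nℤ, the set −D = { −d : d ∈ D } is not equal to the translate D + t. -/

import Mathlib

lemma even_card_of_fpf_involution {α : Type*} [DecidableEq α] (s : Finset α) (f : α → α)
    (hmap : ∀ a ∈ s, f a ∈ s) (hinv : ∀ a ∈ s, f (f a) = a) (hfpf : ∀ a ∈ s, f a ≠ a) :
    Even s.card := by
  induction s using Finset.strongInduction with
  | _ s ih =>
    rcases s.eq_empty_or_nonempty with rfl | ⟨a, ha⟩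
    · simp
    · have hfa : f a ∈ s := hmap a ha
      have hne : f a ≠ a := hfpf a ha
      set s' := s \ {a, f a} with hs'
      have hsub : s' ⊂ s := by
        refine Finset.ssubset_iff_of_subset (Finset.sdiff_subset) |>.mpr ⟨a, ha, by simp [hs']⟩
      have hmem : ∀ b, b ∈ s' ↔ b ∈ s ∧ b ≠ a ∧ b ≠ f a := by
        intro b; simp [hs', and_assoc]
      have hcard : s.card = s'.card + 2 := by
        have hss : ({a, f a} : Finset α) ⊆ s := by
          intro b hb; rcases Finset.mem_insert.mp hb with rfl | hb
          · exact ha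
          · simp at hb; subst hb; exact hfa
        have h2 : 2 ≤ s.card := by
          simpa [Finset.card_pair (Ne.symm hne)] using Finset.card_le_card hss
        rw [hs', Finset.card_sdiff_of_subset hss, Finset.card_pair (Ne.symm hne)]
        omega
      have hev : Even s'.card := by
        refine ih s' hsub (fun b hb => ?_) (fun b hb => hinv b ((hmem b).mp hb).1)
          (fun b hb => hfpf b ((hmem b).mp hb).1)
        rw [hmem] at hb ⊢
        obtain ⟨hbs, hba, hbfa⟩ := hb
        refine ⟨hmap b hbs, ?_, ?_⟩
        · rintro h; exact hbfa (by rw [← h, hinv b hbs])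
        · rintro h
          have := hinv b hbs
          rw [h, hinv a ha] at this
          exact hba this.symm
      rcases hev with ⟨c, hc⟩
      exact ⟨c + 1, by omega⟩

lemma zmod_two_torsion (n : ℕ) (hn : 0 < n) (x : ZMod n) (hx : x + x = 0) :
    x = 0 ∨ x = ((n / 2 : ℕ) : ZMod n) := by
  haveI : NeZero n := ⟨hn.ne'⟩
  have h1 : ((x.val : ℕ) : ZMod n) = x := ZMod.natCast_rightInverse x
  have hv : ((x.val + x.val : ℕ) : ZMod n) = 0 := by push_cast [h1]; exact hx
  rw [ZMod.natCast_eq_zero_iff] at hv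
  have hvlt : x.val < n := ZMod.val_lt x
  rcases hv with ⟨c, hc⟩
  have hcb : c < 2 := by
    by_contra hc2
    push_neg at hc2
    have h3 : n * 2 ≤ n * c := Nat.mul_le_mul_left n hc2
    omega
  interval_cases c
  · left
    have hx0 : x.val = 0 := by omega
    rw [← h1, hx0]; simp
  · right
    have hx2 : x.val = n / 2 := by omega
    rw [← h1, hx2]

/-- **Proposition 6.1 (Storer's Statement).**  `-1` is not a multiplier of a nontrivial
`(n,k,u)`-difference set `D ⊆ ℤ/nℤ` (with `2 ≤ k` and `2k ≤ n - 1`): no translate of `D`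
equals `-D`. -/
theorem davenport_storer
    (n k u : ℕ) (hn : 0 < n) (hk : 2 ≤ k) (hu : 0 < u) (h2k : 2 * k ≤ n - 1)
    (D : Finset (ZMod n)) (hcard : D.card = k)
    (hdiff : ∀ x : ZMod n, x ≠ 0 →
      ((D ×ˢ D).filter (fun p => p.1 - p.2 = x)).card = u) :
    ∀ t : ZMod n, D.image (fun d => -d) ≠ D.image (fun d => d + t) := by
  intro t h
  haveI : NeZero n := ⟨hn.ne'⟩
  have hn5 : 5 ≤ n := by omega
  -- σ maps D into D
  have hσ : ∀ d ∈ D, -d - t ∈ D := by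
    intro d hd
    have : -d ∈ D.image (fun d => d + t) := by
      rw [← h]; exact Finset.mem_image_of_mem _ hd
    obtain ⟨d', hd', hdd⟩ := Finset.mem_image.mp this
    have : d' = -d - t := by linear_combination hdd
    rwa [← this]
  -- doubling fiber counts
  set g : ZMod n → ℕ := fun y => (D.filter (fun d => d + d = y)).card with hg
  -- total count
  have hsum : ∑ y : ZMod n, g y = k := by
    rw [← hcard]
    exact (Finset.card_eq_sum_card_fiberwise (fun d _ => Finset.mem_univ (d + d))).symm
  -- parity relation
  have hpar : ∀ y : ZMod n, y ≠ -t → u % 2 = g y % 2 := by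
    intro y hy
    have hx : y + t ≠ 0 := fun hc => hy (by linear_combination hc)
    set P := (D ×ˢ D).filter (fun p => p.1 - p.2 = y + t) with hP
    have hPcard : P.card = u := hdiff _ hx
    set τ : ZMod n × ZMod n → ZMod n × ZMod n := fun p => (-p.2 - t, -p.1 - t) with hτ
    have hmem : ∀ p ∈ P, p.1 ∈ D ∧ p.2 ∈ D ∧ p.1 - p.2 = y + t := by
      intro p hp
      simp only [hP, Finset.mem_filter, Finset.mem_product] at hp
      exact ⟨hp.1.1, hp.1.2, hp.2⟩
    have hτmap : ∀ p ∈ P, τ p ∈ P := by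
      intro p hp
      obtain ⟨h1, h2, h3⟩ := hmem p hp
      simp only [hP, hτ, Finset.mem_filter, Finset.mem_product]
      exact ⟨⟨hσ _ h2, hσ _ h1⟩, by linear_combination h3⟩
    have hτinv : ∀ p ∈ P, τ (τ p) = p := by
      intro p _
      simp only [hτ]
      ext <;> dsimp only <;> ring
    -- fixed-point set has card g y
    have hfix : (P.filter (fun p => τ p = p)).card = g y := by
      rw [hg]
      apply Finset.card_bij (fun p _ => p.1)
      · intro p hp
        simp only [Finset.mem_filter] at hp ⊢
        obtain ⟨h1, h2, h3⟩ := hmem p hp.1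
        have hfix : -p.2 - t = p.1 := congrArg Prod.fst hp.2
        exact ⟨h1, by linear_combination h3 - hfix⟩
      · intro p hp q hq hpq
        simp only [Finset.mem_filter] at hp hq
        have hp2 : -p.1 - t = p.2 := congrArg Prod.snd hp.2
        have hq2 : -q.1 - t = q.2 := congrArg Prod.snd hq.2
        ext
        · exact hpq
        · rw [← hp2, ← hq2, hpq]
      · intro d hd
        simp only [Finset.mem_filter] at hd
        refine ⟨(d, -d - t), ?_, rfl⟩
        simp only [Finset.mem_filter, hP, hτ, Finset.mem_product]
        refine ⟨⟨⟨hd.1, hσ _ hd.1⟩, by linear_combination hd.2⟩, ?_⟩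
        ext <;> dsimp only <;> ring
    -- non-fixed part is even
    have hnfix : Even ((P.filter (fun p => ¬ τ p = p)).card) := by
      apply even_card_of_fpf_involution _ τ
      · intro p hp
        simp only [Finset.mem_filter] at hp ⊢
        refine ⟨hτmap p hp.1, fun hc => hp.2 ?_⟩
        have := hτinv p hp.1
        rw [hc] at this
        exact this
      · intro p hp
        simp only [Finset.mem_filter] at hp
        exact hτinv p hp.1
      · intro p hp
        simp only [Finset.mem_filter] at hp
        exact hp.2
    have hsplit : (P.filter (fun p => τ p = p)).card
        + (P.filter (fun p => ¬ τ p = p)).card = P.card :=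
      Finset.card_filter_add_card_filter_not _
    rcases hnfix with ⟨c, hc⟩
    omega
  -- the fundamental identity u (n-1) = k (k-1)
  have hid : u * (n - 1) = k * (k - 1) := by
    have htot : (D ×ˢ D).card = ∑ x : ZMod n,
        ((D ×ˢ D).filter (fun p => p.1 - p.2 = x)).card :=
      Finset.card_eq_sum_card_fiberwise (fun p _ => Finset.mem_univ _)
    have hzero : ((D ×ˢ D).filter (fun p => p.1 - p.2 = 0)).card = k := by
      rw [← hcard]
      apply Finset.card_bij (fun p _ => p.1)
      · intro p hp
        simp only [Finset.mem_filter, Finset.mem_product] at hp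
        exact hp.1.1
      · intro p hp q hq hpq
        simp only [Finset.mem_filter, Finset.mem_product] at hp hq
        have h1 : p.2 = p.1 := by linear_combination -hp.2
        have h2 : q.2 = q.1 := by linear_combination -hq.2
        ext
        · exact hpq
        · rw [h1, h2, hpq]
      · intro d hd
        exact ⟨(d, d), by simp [Finset.mem_filter, Finset.mem_product, hd], rfl⟩
    have hrest : ∑ x ∈ Finset.univ.erase (0 : ZMod n),
        ((D ×ˢ D).filter (fun p => p.1 - p.2 = x)).card = u * (n - 1) := by
      rw [Finset.sum_congr rfl (fun x hx => hdiff x (Finset.ne_of_mem_erase hx))]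
      rw [Finset.sum_const, Finset.card_erase_of_mem (Finset.mem_univ _),
        Finset.card_univ, ZMod.card, smul_eq_mul, mul_comm]
    have hDD : (D ×ˢ D).card = k * k := by rw [Finset.card_product, hcard]
    rw [hDD, ← Finset.sum_erase_add _ _ (Finset.mem_univ (0 : ZMod n)), hrest, hzero] at htot
    have hkk : k * (k - 1) = k * k - k := by
      rw [Nat.mul_sub, mul_one]
    omega
  -- case on parity of u
  rcases Nat.even_or_odd u with hue | huo
  · -- u even
    rcases Nat.even_or_odd n with hne | hno
    · -- n even : use the 2-torsion element n/2
      set c : ZMod n := ((n / 2 : ℕ) : ZMod n) with hcdef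
      have hcne : c ≠ 0 := by
        intro hc
        rw [hcdef, ZMod.natCast_eq_zero_iff] at hc
        rcases hc with ⟨e, he⟩
        have hlt : n / 2 < n := Nat.div_lt_self (by omega) (by omega)
        have he0 : e = 0 := by
          by_contra h0
          have : n * 1 ≤ n * e := Nat.mul_le_mul_left n (by omega)
          omega
        subst he0
        simp at he
        omega
      have hstep : ∀ d ∈ D, d + d ≠ -t → d + c ∈ D := by
        intro d hd hdt
        have hp := hpar (d + d) hdt
        simp only [hg] at hp
        have h1 : 1 ≤ (D.filter (fun e => e + e = d + d)).card :=
          Finset.card_pos.mpr ⟨d, Finset.mem_filter.mpr ⟨hd, rfl⟩⟩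
        have h2 : 2 ≤ (D.filter (fun e => e + e = d + d)).card := by
          rcases hue with ⟨m, hm⟩
          omega
        obtain ⟨d', hd', hdd'⟩ : ∃ d' ∈ D.filter (fun e => e + e = d + d), d' ≠ d :=
          Finset.exists_mem_ne (by omega) d
        simp only [Finset.mem_filter] at hd'
        have htor : (d' - d) + (d' - d) = 0 := by linear_combination hd'.2
        rcases zmod_two_torsion n hn _ htor with h0 | hc
        · exact absurd (by linear_combination h0) hdd'
        · have hdc : d + c = d' := by linear_combination hcdef - hc
          rw [hdc]; exact hd'.1
      -- count elements with d + d = -t : at most 2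
      have hg2 : (D.filter (fun d => d + d = -t)).card ≤ 2 := by
        rcases (D.filter (fun d => d + d = -t)).eq_empty_or_nonempty with he | ⟨d₀, hd₀⟩
        · rw [he]; simp
        · have hsub : D.filter (fun d => d + d = -t) ⊆ {d₀, d₀ + c} := by
            intro d hd
            simp only [Finset.mem_filter] at hd hd₀
            have htor : (d - d₀) + (d - d₀) = 0 := by
              have := hd.2; have := hd₀.2; linear_combination hd.2 - hd₀.2
            rcases zmod_two_torsion n hn _ htor with h0 | hcc
            · simp only [Finset.mem_insert, Finset.mem_singleton]
              left; linear_combination h0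
            · simp only [Finset.mem_insert, Finset.mem_singleton]
              right; linear_combination hcc - hcdef
          calc (D.filter (fun d => d + d = -t)).card
              ≤ ({d₀, d₀ + c} : Finset (ZMod n)).card := Finset.card_le_card hsub
            _ ≤ 2 := Finset.card_insert_le _ _ |>.trans (by simp)
      -- u ≥ k - 2 via injection d ↦ (d + c, d)
      have hukb : k ≤ u + 2 := by
        have hinj : (D.filter (fun d => d + d ≠ -t)).card
            ≤ ((D ×ˢ D).filter (fun p => p.1 - p.2 = c)).card := by
          apply Finset.card_le_card_of_injOn (fun d => (d + c, d))
          · intro d hd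
            simp only [Finset.mem_coe, Finset.mem_filter] at hd
            simp only [Finset.mem_coe, Finset.mem_filter, Finset.mem_product]
            exact ⟨⟨hstep d hd.1 hd.2, hd.1⟩, by ring⟩
          · intro a _ b _ hab
            exact congrArg Prod.snd hab
        rw [hdiff c hcne] at hinj
        have hsplit : (D.filter (fun d => d + d = -t)).card
            + (D.filter (fun d => ¬ d + d = -t)).card = D.card :=
          Finset.card_filter_add_card_filter_not _
        have : (D.filter (fun d => d + d ≠ -t)).card
            = (D.filter (fun d => ¬ d + d = -t)).card := rfl
        omega
      -- u ≤ (k-1)/2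
      have hub : 2 * u ≤ k - 1 := by
        have h1 : u * (2 * k) ≤ u * (n - 1) := Nat.mul_le_mul_left u h2k
        rw [hid] at h1
        have h2 : 2 * u * k ≤ (k - 1) * k := by
          calc 2 * u * k = u * (2 * k) := by ring
            _ ≤ k * (k - 1) := h1
            _ = (k - 1) * k := by ring
        exact Nat.le_of_mul_le_mul_right h2 (by omega)
      rcases hue with ⟨m, hm⟩
      omega
    · -- n odd : doubling is injective
      have hlin : ∀ a b : ZMod n, a + a = b + b → a = b := by
        intro a b hab
        have hm : 2 * ((n + 1) / 2) = n + 1 := by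
          rcases hno with ⟨m, hm⟩; omega
        have h1 : (((n + 1) / 2 : ℕ) : ZMod n) * (a + a) = a := by
          have : ((2 * ((n + 1) / 2) : ℕ) : ZMod n) = 1 := by
            rw [hm]; push_cast [ZMod.natCast_self]; ring
          calc (((n + 1) / 2 : ℕ) : ZMod n) * (a + a)
              = ((2 * ((n + 1) / 2) : ℕ) : ZMod n) * a := by push_cast; ring
            _ = a := by rw [this, one_mul]
        have h2 : (((n + 1) / 2 : ℕ) : ZMod n) * (b + b) = b := by
          have : ((2 * ((n + 1) / 2) : ℕ) : ZMod n) = 1 := by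
            rw [hm]; push_cast [ZMod.natCast_self]; ring
          calc (((n + 1) / 2 : ℕ) : ZMod n) * (b + b)
              = ((2 * ((n + 1) / 2) : ℕ) : ZMod n) * b := by push_cast; ring
            _ = b := by rw [this, one_mul]
        rw [← h1, ← h2, hab]
      have hgle : ∀ y : ZMod n, g y ≤ 1 := by
        intro y
        rw [hg]
        apply Finset.card_le_one.mpr
        intro a ha b hb
        simp only [Finset.mem_filter] at ha hb
        exact hlin a b (by rw [ha.2, hb.2])
      have hzero : ∀ y : ZMod n, y ≠ -t → g y = 0 := by
        intro y hy
        have := hpar y hy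
        have := hgle y
        rcases hue with ⟨m, hm⟩
        omega
      have : k ≤ 1 := by
        rw [← hsum, ← Finset.sum_erase_add _ _ (Finset.mem_univ (-t : ZMod n))]
        rw [Finset.sum_eq_zero (fun y hy => hzero y (Finset.ne_of_mem_erase hy))]
        simpa using hgle (-t)
      omega
  · -- u odd : every fiber g y for y ≠ -t is odd, hence ≥ 1, so k ≥ n - 1
    have hge : ∀ y : ZMod n, y ≠ -t → 1 ≤ g y := by
      intro y hy
      have := hpar y hy
      rcases huo with ⟨m, hm⟩
      omega
    have hbig : n - 1 ≤ k := by
      calc n - 1 = (Finset.univ.erase (-t : ZMod n)).card := by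
            rw [Finset.card_erase_of_mem (Finset.mem_univ _), Finset.card_univ, ZMod.card]
        _ = ∑ y ∈ Finset.univ.erase (-t : ZMod n), 1 := by rw [Finset.sum_const, smul_eq_mul, mul_one]
        _ ≤ ∑ y ∈ Finset.univ.erase (-t : ZMod n), g y :=
            Finset.sum_le_sum (fun y hy => hge y (Finset.ne_of_mem_erase hy))
        _ ≤ ∑ y : ZMod n, g y :=
            Finset.sum_le_sum_of_subset (Finset.erase_subset _ _)
        _ = k := hsum
    omega
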